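/- Let A, B, C be a triangle, A₁ the point strictly between B and C with ∠BAA₁ = ∠A₁AC, B₁ the point strictly between A and C with ∠ABB₁ = ∠B₁BC, and J a point lying on both segment AA₁ and segment BB₁. If dist J A₁ = dist J B₁, then dist A C = dist B C or ∠ACB = π/3. -/

import Mathlib

open EuclideanGeometry Real

section Helpers

variable {V P : Type*} [NormedAddCommGroup V] [InnerProductSpace ℝ V] [MetricSpace P]
  [NormedAddTorsor V P]

/-- Law of sines (product form): common value is twice the area. -/
private lemma sine_rule (p q r : P) :
    Real.sin (∠ p q r) * (dist p q * dist r q) =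
      Real.sin (∠ q p r) * (dist q p * dist r p) := by
  rw [EuclideanGeometry.angle, EuclideanGeometry.angle, dist_eq_norm_vsub V p q,
    dist_eq_norm_vsub V r q, dist_eq_norm_vsub V q p, dist_eq_norm_vsub V r p,
    InnerProductGeometry.sin_angle_mul_norm_mul_norm,
    InnerProductGeometry.sin_angle_mul_norm_mul_norm]
  congr 1
  have h1 : q -ᵥ p = -(p -ᵥ q) := (neg_vsub_eq_vsub_rev p q).symm
  have h2 : r -ᵥ p = (r -ᵥ q) - (p -ᵥ q) := (vsub_sub_vsub_cancel_right r p q).symm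
  rw [h1, h2]
  set x := p -ᵥ q
  set y := r -ᵥ q
  simp only [inner_neg_left, inner_neg_right, inner_sub_left, inner_sub_right, neg_neg, neg_sub]
  rw [real_inner_comm y x]
  ring

/-- Angle is unchanged when the right-hand point moves along the ray. -/
private lemma angle_eq_of_wbtw {q r' r : P} (p : P) (h : Wbtw ℝ q r' r) (hne : r' ≠ q) :
    ∠ p q r' = ∠ p q r := by
  obtain ⟨t, ht, rfl⟩ := h
  have hv : AffineMap.lineMap q r t -ᵥ q = t • (r -ᵥ q) := by
    simp [AffineMap.lineMap_apply]
  have htpos : 0 < t := by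
    rcases ht.1.lt_or_eq with h' | h'
    · exact h'
    · exfalso; apply hne; rw [← h'] ; simp
  rw [EuclideanGeometry.angle, EuclideanGeometry.angle, hv,
    InnerProductGeometry.angle_smul_right_of_pos _ _ htpos]

private lemma sin_eq_cases {x y : ℝ} (hx0 : 0 < x) (hxπ : x < π) (hy0 : 0 < y) (hyπ : y < π)
    (h : Real.sin x = Real.sin y) : x = y ∨ x + y = π := by
  have h2 : (Real.cos x - Real.cos y) * (Real.cos x + Real.cos y) = 0 := by
    have hx := Real.sin_sq_add_cos_sq x
    have hy := Real.sin_sq_add_cos_sq y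
    linear_combination hx - hy - (Real.sin x + Real.sin y) * h
  rcases mul_eq_zero.1 h2 with h' | h'
  · left
    exact Real.injOn_cos ⟨hx0.le, hxπ.le⟩ ⟨hy0.le, hyπ.le⟩ (by linarith)
  · right
    have hc : Real.cos x = Real.cos (π - y) := by rw [Real.cos_pi_sub]; linarith
    have := Real.injOn_cos ⟨hx0.le, hxπ.le⟩ ⟨by linarith, by linarith⟩ hc
    linarith

private lemma collinear_step {s q p r : P} (hmem : p ∈ line[ℝ, q, r]) (hpq : p ≠ q)
    (h : Collinear ℝ ({s, q, p} : Set P)) : Collinear ℝ ({s, q, r} : Set P) := by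
  have hs : s ∈ line[ℝ, q, p] :=
    h.mem_affineSpan_of_mem_of_ne (by simp) (by simp) (by simp) (Ne.symm hpq)
  have hle : line[ℝ, q, p] ≤ line[ℝ, q, r] := by
    apply affineSpan_le.2
    rw [Set.insert_subset_iff, Set.singleton_subset_iff]
    exact ⟨left_mem_affineSpan_pair ℝ q r, hmem⟩
  exact collinear_insert_of_mem_affineSpan_pair (hle hs)

end Helpers

set_option maxHeartbeats 2000000 in
theorem stmt_9 (A B C A₁ B₁ J : EuclideanSpace ℝ (Fin 2))
    (hABC : ¬ Collinear ℝ ({A, B, C} : Set (EuclideanSpace ℝ (Fin 2))))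
    (hA₁ : Sbtw ℝ B A₁ C) (hA₁' : ∠ B A A₁ = ∠ A₁ A C)
    (hB₁ : Sbtw ℝ A B₁ C) (hB₁' : ∠ A B B₁ = ∠ B₁ B C)
    (hJA : J ∈ segment ℝ A A₁) (hJB : J ∈ segment ℝ B B₁)
    (h : dist J A₁ = dist J B₁) :
    dist A C = dist B C ∨ ∠ A C B = π / 3 := by
  have hAB : A ≠ B := by
    rintro rfl
    exact hABC ((collinear_pair ℝ A C).subset (by intro t ht; simp at ht ⊢; tauto))
  have hA₁mem : A₁ ∈ line[ℝ, B, C] := hA₁.wbtw.mem_affineSpan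
  have hB₁mem : B₁ ∈ line[ℝ, A, C] := hB₁.wbtw.mem_affineSpan
  have hA₁A : A₁ ≠ A := by
    rintro rfl
    exact hABC (collinear_insert_of_mem_affineSpan_pair hA₁mem)
  have hB₁B : B₁ ≠ B := by
    rintro rfl
    exact hABC ((collinear_insert_of_mem_affineSpan_pair hB₁mem).subset
      (by intro t ht; simp at ht ⊢; tauto))
  have nABA₁ : ¬ Collinear ℝ ({A, B, A₁} : Set (EuclideanSpace ℝ (Fin 2))) := fun hc =>
    hABC (collinear_step hA₁mem hA₁.ne_left hc)
  have nBAB₁ : ¬ Collinear ℝ ({B, A, B₁} : Set (EuclideanSpace ℝ (Fin 2))) := by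
    intro hc
    exact hABC ((collinear_step hB₁mem hB₁.ne_left hc).subset
      (by intro t ht; simp at ht ⊢; tauto))
  have hJAw : Wbtw ℝ A J A₁ := mem_segment_iff_wbtw.1 hJA
  have hJBw : Wbtw ℝ B J B₁ := mem_segment_iff_wbtw.1 hJB
  have hJB' : J ≠ B := by rintro rfl; exact nABA₁ hJAw.collinear
  have hJA' : J ≠ A := by rintro rfl; exact nBAB₁ hJBw.collinear
  have hA₁B₁ : A₁ ≠ B₁ := by
    intro heq
    have c1 : Collinear ℝ ({B, C, A₁} : Set (EuclideanSpace ℝ (Fin 2))) :=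
      (collinear_insert_of_mem_affineSpan_pair hA₁mem).subset
        (by intro t ht; simp at ht ⊢; tauto)
    have hmem' : A₁ ∈ line[ℝ, C, A] := by
      rw [heq]; exact hB₁.symm.wbtw.mem_affineSpan
    have c2 : Collinear ℝ ({B, C, A} : Set (EuclideanSpace ℝ (Fin 2))) :=
      collinear_step hmem' hA₁.ne_right c1
    exact hABC (c2.subset (by intro t ht; simp at ht ⊢; tauto))
  have hJA₁ : J ≠ A₁ := by
    intro heq
    have h0 : dist J B₁ = 0 := by rw [← h, heq, dist_self]
    exact hA₁B₁ (heq.symm.trans (dist_eq_zero.1 h0))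
  have hJB₁ : J ≠ B₁ := by
    intro heq
    have h0 : dist J A₁ = 0 := by rw [h, heq, dist_self]
    exact hA₁B₁ ((dist_eq_zero.1 h0).symm.trans heq)
  have sJA : Sbtw ℝ A J A₁ := ⟨hJAw, hJA', hJA₁⟩
  have sJB : Sbtw ℝ B J B₁ := ⟨hJBw, hJB', hJB₁⟩
  have nJBA₁ : ¬ Collinear ℝ ({J, B, A₁} : Set (EuclideanSpace ℝ (Fin 2))) := by
    intro hc
    have hAmem : A ∈ line[ℝ, A₁, J] :=
      hJAw.collinear.mem_affineSpan_of_mem_of_ne (by simp) (by simp) (by simp) (Ne.symm hJA₁)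
    have hBmem : B ∈ line[ℝ, A₁, J] :=
      hc.mem_affineSpan_of_mem_of_ne (by simp) (by simp) (by simp) (Ne.symm hJA₁)
    exact nABA₁ ((collinear_insert_insert_of_mem_affineSpan_pair hAmem hBmem).subset
      (by intro t ht; simp at ht ⊢; tauto))
  -- angle-sum and ray-rewriting facts
  have e1 : ∠ A B A₁ + ∠ B A₁ A + ∠ A₁ A B = π :=
    angle_add_angle_add_angle_eq_pi _ (Ne.symm hAB)
  have r1 : ∠ A B A₁ = ∠ A B C := angle_eq_of_wbtw A hA₁.wbtw hA₁.ne_left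
  have r2 : ∠ A₁ A B = ∠ B A A₁ := angle_comm _ _ _
  have e2 : ∠ A₁ C A + ∠ C A A₁ + ∠ A A₁ C = π :=
    angle_add_angle_add_angle_eq_pi _ (Ne.symm hA₁.ne_right)
  have s1 : ∠ A A₁ B + ∠ A A₁ C = π :=
    angle_add_angle_eq_pi_of_angle_eq_pi A hA₁.angle₁₂₃_eq_pi
  have r3 : ∠ A A₁ B = ∠ B A₁ A := angle_comm _ _ _
  have r4 : ∠ A₁ C A = ∠ A C B := by
    rw [angle_comm A₁ C A, angle_eq_of_wbtw A hA₁.symm.wbtw hA₁.ne_right]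
  have r5 : ∠ C A A₁ = ∠ B A A₁ := by
    rw [angle_comm C A A₁, ← hA₁']
  have e3 : ∠ B A B₁ + ∠ A B₁ B + ∠ B₁ B A = π :=
    angle_add_angle_add_angle_eq_pi _ hAB
  have r6 : ∠ B A B₁ = ∠ B A C := angle_eq_of_wbtw B hB₁.wbtw hB₁.ne_left
  have r7 : ∠ B₁ B A = ∠ A B B₁ := angle_comm _ _ _
  have e4 : ∠ B₁ C B + ∠ C B B₁ + ∠ B B₁ C = π :=
    angle_add_angle_add_angle_eq_pi _ (Ne.symm hB₁.ne_right)
  have s2 : ∠ B B₁ A + ∠ B B₁ C = π :=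
    angle_add_angle_eq_pi_of_angle_eq_pi B hB₁.angle₁₂₃_eq_pi
  have r8 : ∠ B B₁ A = ∠ A B₁ B := angle_comm _ _ _
  have r9 : ∠ B₁ C B = ∠ A C B := by
    rw [angle_comm B₁ C B, angle_eq_of_wbtw B hB₁.symm.wbtw hB₁.ne_right, angle_comm]
  have r10 : ∠ C B B₁ = ∠ A B B₁ := by
    rw [angle_comm C B B₁, ← hB₁']
  have hAC : A ≠ C := by
    rintro rfl
    exact hABC ((collinear_pair ℝ A B).subset (by intro t ht; simp at ht ⊢; tauto))
  have e5 : ∠ A B C + ∠ B C A + ∠ C A B = π :=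
    angle_add_angle_add_angle_eq_pi _ (Ne.symm hAB)
  have r11 : ∠ B C A = ∠ A C B := angle_comm _ _ _
  have r12 : ∠ C A B = ∠ B A C := angle_comm _ _ _
  have e6 : ∠ J B A₁ + ∠ B A₁ J + ∠ A₁ J B = π :=
    angle_add_angle_add_angle_eq_pi _ (Ne.symm hJB')
  have r13 : ∠ J B A₁ = ∠ A B B₁ := by
    rw [angle_eq_of_wbtw J hA₁.wbtw hA₁.ne_left, angle_comm J B C,
      angle_eq_of_wbtw C hJBw hJB', angle_comm C B B₁, ← hB₁']
  have r14 : ∠ B A₁ J = ∠ B A₁ A := angle_eq_of_wbtw B hJAw.symm hJA₁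
  have e7 : ∠ J A B₁ + ∠ A B₁ J + ∠ B₁ J A = π :=
    angle_add_angle_add_angle_eq_pi _ (Ne.symm hJA')
  have r15 : ∠ J A B₁ = ∠ B A A₁ := by
    rw [angle_eq_of_wbtw J hB₁.wbtw hB₁.ne_left, angle_comm J A C,
      angle_eq_of_wbtw C hJAw hJA', angle_comm C A A₁, ← hA₁']
  have r16 : ∠ A B₁ J = ∠ A B₁ B := angle_eq_of_wbtw A hJBw.symm hJB₁
  have e8 : ∠ A₁ J B = ∠ A J B₁ :=
    angle_eq_angle_of_angle_eq_pi_of_angle_eq_pi sJA.angle₃₂₁_eq_pi sJB.angle₁₂₃_eq_pi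
  have r17 : ∠ B₁ J A = ∠ A₁ J B := by rw [angle_comm B₁ J A, ← e8]
  -- sine rules
  have F1 := sine_rule A A₁ B
  rw [r3, dist_comm A₁ A, dist_comm B A, angle_comm A₁ A B] at F1
  have F2 := sine_rule J B A₁
  rw [r13, dist_comm A₁ B, dist_comm B J, dist_comm A₁ J, angle_comm B J A₁] at F2
  have G1 := sine_rule B B₁ A
  rw [r8, dist_comm B₁ B, r7] at G1
  have G2 := sine_rule J A B₁
  rw [r15, dist_comm A J, dist_comm B₁ A, dist_comm B₁ J, ← e8] at G2
  -- cancellations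
  have hdAA₁ : dist A A₁ ≠ 0 := dist_ne_zero.2 (Ne.symm hA₁A)
  have hdJB : dist J B ≠ 0 := dist_ne_zero.2 hJB'
  have hdBB₁ : dist B B₁ ≠ 0 := dist_ne_zero.2 (Ne.symm hB₁B)
  have hdJA : dist J A ≠ 0 := dist_ne_zero.2 hJA'
  have F1' : Real.sin (∠ B A₁ A) * dist B A₁ = Real.sin (∠ B A A₁) * dist A B :=
    mul_left_cancel₀ hdAA₁ (by linear_combination F1)
  have F2' : Real.sin (∠ A B B₁) * dist B A₁ = Real.sin (∠ A₁ J B) * dist J A₁ :=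
    mul_left_cancel₀ hdJB (by linear_combination F2)
  have G1' : Real.sin (∠ A B₁ B) * dist A B₁ = Real.sin (∠ A B B₁) * dist A B :=
    mul_left_cancel₀ hdBB₁ (by linear_combination G1)
  have G2' : Real.sin (∠ B A A₁) * dist A B₁ = Real.sin (∠ A₁ J B) * dist J B₁ :=
    mul_left_cancel₀ hdJA (by linear_combination G2)
  have hszpos : 0 < Real.sin (∠ A₁ J B) :=
    sin_pos_of_not_collinear (fun hc => nJBA₁ (hc.subset (by intro t ht; simp at ht ⊢; tauto)))
  have hdJA₁pos : (0:ℝ) < dist J A₁ := dist_pos.2 hJA₁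
  have key : Real.sin (∠ B A₁ A) * (Real.sin (∠ A₁ J B) * dist J A₁) =
      Real.sin (∠ A B₁ B) * (Real.sin (∠ A₁ J B) * dist J A₁) := by
    linear_combination Real.sin (∠ A B B₁) * F1' - Real.sin (∠ B A₁ A) * F2' -
      Real.sin (∠ B A A₁) * G1' + Real.sin (∠ A B₁ B) * G2' -
      Real.sin (∠ A B₁ B) * Real.sin (∠ A₁ J B) * h
  have hsxy : Real.sin (∠ B A₁ A) = Real.sin (∠ A B₁ B) :=
    mul_right_cancel₀ (ne_of_gt (mul_pos hszpos hdJA₁pos)) key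
  have nBA₁A : ¬ Collinear ℝ ({B, A₁, A} : Set (EuclideanSpace ℝ (Fin 2))) := fun hc =>
    nABA₁ (hc.subset (by intro t ht; simp at ht ⊢; tauto))
  have nAB₁B : ¬ Collinear ℝ ({A, B₁, B} : Set (EuclideanSpace ℝ (Fin 2))) := fun hc =>
    nBAB₁ (hc.subset (by intro t ht; simp at ht ⊢; tauto))
  rcases sin_eq_cases (angle_pos_of_not_collinear nBA₁A) (angle_lt_pi_of_not_collinear nBA₁A)
    (angle_pos_of_not_collinear nAB₁B) (angle_lt_pi_of_not_collinear nAB₁B) hsxy with hxy | hxy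
  · left
    have hangle : ∠ C A B = ∠ C B A := by
      rw [angle_comm C A B, angle_comm C B A]
      linarith [e1, e2, e3, e4, e5, s1, s2, r1, r2, r3, r4, r5, r6, r7, r8, r9, r10, r11, r12]
    have hne : ∠ A C B ≠ π := angle_ne_pi_of_not_collinear
      (fun hc => hABC (hc.subset (by intro t ht; simp at ht ⊢; tauto)))
    have hd := dist_eq_of_angle_eq_angle_of_angle_ne_pi hangle hne
    rw [dist_comm A C, dist_comm B C]
    exact hd
  · right
    linarith [e1, e2, e3, e4, e5, s1, s2, r1, r2, r3, r4, r5, r6, r7, r8, r9, r10, r11, r12]
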